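/- For every integer k ≥ 1, the Laurent polynomial x^{k+1} r_k(x) + x^{k+1} s_k(x) · (Σ_{l=1}^{2k+1} (−1)^{l−1}(l−1)! x^{−l}) is congruent to the constant k! modulo x^{−1}ℚ[x^{−1}]; that is, its coefficient of x^{j} vanishes for every j ≥ 1 and its constant coefficient equals k!. -/

import Mathlib

open Polynomial Finset LaurentPolynomial

lemma fd (k : ℕ) : ∀ n m : ℕ, ∑ i ∈ range (k+1), (-1:ℚ)^i * (k.choose i) * ((n+i).choose (m+i)) = (-1)^k * (n.choose (m+k)) := by
  induction k with
  | zero => simp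
  | succ k ih =>
    intro n m
    rw [Finset.sum_range_succ' (fun i => (-1:ℚ)^i * ((k+1).choose i) * ((n+i).choose (m+i)))]
    have split : ∑ i ∈ range (k+1), (-1:ℚ)^(i+1) * ((k+1).choose (i+1)) * ((n+(i+1)).choose (m+(i+1)))
        = (∑ i ∈ range (k+1), (-1:ℚ)^(i+1) * (k.choose (i+1)) * ((n+(i+1)).choose (m+(i+1))))
          - ∑ i ∈ range (k+1), (-1:ℚ)^i * (k.choose i) * (((n+1)+i).choose ((m+1)+i)) := by
      rw [← Finset.sum_sub_distrib]
      apply Finset.sum_congr rfl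
      intro i _
      rw [Nat.choose_succ_succ k i]
      have : n + (i+1) = (n+1) + i := by ring
      rw [this]
      have : m + (i+1) = (m+1) + i := by ring
      rw [this]
      push_cast
      ring
    rw [split, ih (n+1) (m+1)]
    have first : (∑ i ∈ range (k+1), (-1:ℚ)^(i+1) * (k.choose (i+1)) * ((n+(i+1)).choose (m+(i+1))))
        + (-1:ℚ)^0 * ((k+1).choose 0) * ((n+0).choose (m+0))
        = (-1:ℚ)^k * (n.choose (m+k)) := by
      have h2 : ∑ i ∈ range (k+2), (-1:ℚ)^i * (k.choose i) * ((n+i).choose (m+i))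
          = ∑ i ∈ range (k+1), (-1:ℚ)^i * (k.choose i) * ((n+i).choose (m+i)) := by
        rw [Finset.sum_range_succ]
        simp [Nat.choose_succ_self]
      rw [← ih n m, ← h2,
        Finset.sum_range_succ' (fun i => (-1:ℚ)^i * (k.choose i) * ((n+i).choose (m+i)))]
      simp
    rw [sub_add_eq_add_sub, first]
    have e : m + 1 + k = m + k + 1 := by ring
    rw [e]
    have : (n+1).choose (m+k+1) = n.choose (m+k) + n.choose (m+k+1) := Nat.choose_succ_succ n (m+k)
    rw [this]
    push_cast
    ring_nf

noncomputable def σf (k i : ℕ) : ℚ := (k.choose i : ℚ) / (i.factorial : ℚ)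

lemma chooseQ (m j : ℕ) : ((m:ℚ) + 1 - j) * ((m+1).choose j) = ((m:ℚ)+1) * (m.choose j) := by
  rcases le_or_gt j (m+1) with h | h
  · have := Nat.choose_mul_succ_eq m j
    have hc : ((m.choose j * (m+1) : ℕ) : ℚ) = (((m+1).choose j * (m+1-j) : ℕ) : ℚ) := by rw [this]
    push_cast [Nat.cast_sub h] at hc
    linarith
  · rw [Nat.choose_eq_zero_of_lt h, Nat.choose_eq_zero_of_lt (by omega)]
    simp

lemma mainσ (m j : ℕ) : ((m:ℚ)+2) * ((m+2).choose (j+1))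
    = (2*(m:ℚ)+3) * ((m+1).choose (j+1)) + ((j:ℚ)+1) * ((m+1).choose j) - ((m:ℚ)+1) * (m.choose (j+1)) := by
  have pascal : ((m+2).choose (j+1) : ℚ) = ((m+1).choose j : ℚ) + ((m+1).choose (j+1) : ℚ) := by
    exact_mod_cast congrArg (Nat.cast (R := ℚ)) (Nat.choose_succ_succ (m+1) j)
  have pascal2 : ((m+1).choose (j+1) : ℚ) = (m.choose j : ℚ) + (m.choose (j+1) : ℚ) := by
    exact_mod_cast congrArg (Nat.cast (R := ℚ)) (Nat.choose_succ_succ m j)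
  have key : ((m:ℚ)+1-j) * ((m+1).choose j) = ((m:ℚ)+1) * (m.choose j) := chooseQ m j
  linear_combination ((m:ℚ)+2) * pascal - ((m:ℚ)+1) * pascal2 + key

lemma keyσ (m j : ℕ) : ((m:ℚ)+2) * σf (m+2) (j+1)
    = (2*(m:ℚ)+3) * σf (m+1) (j+1) + σf (m+1) j - ((m:ℚ)+1) * σf m (j+1) := by
  unfold σf
  have h1 : (j.factorial : ℚ) ≠ 0 := by exact_mod_cast j.factorial_ne_zero
  have h2 : ((j+1).factorial : ℚ) ≠ 0 := by exact_mod_cast (j+1).factorial_ne_zero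
  have hmid : ((m+1).choose j : ℚ) / (j.factorial : ℚ)
      = (((j:ℚ)+1) * ((m+1).choose j)) / ((j+1).factorial : ℚ) := by
    rw [Nat.factorial_succ]
    push_cast
    rw [mul_div_mul_left _ _ (by positivity : ((j:ℚ)+1) ≠ 0)]
  rw [hmid, mul_div_assoc', mul_div_assoc', mul_div_assoc', ← add_div, div_sub_div_same,
    div_eq_div_iff h2 h2]
  linear_combination ((j+1).factorial : ℚ) * mainσ m j

lemma keyσ0 (m : ℕ) : ((m:ℚ)+2) * σf (m+2) 0
    = (2*(m:ℚ)+3) * σf (m+1) 0 - ((m:ℚ)+1) * σf m 0 := by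
  simp [σf]
  ring

lemma coeff_comb (p q : Polynomial ℚ) (a b c : ℚ) (i : ℕ) :
    (Polynomial.C a * (Polynomial.C b + X) * p - Polynomial.C c * q).coeff i
    = a * b * p.coeff i + a * (if i = 0 then 0 else p.coeff (i-1)) - c * q.coeff i := by
  rw [coeff_sub, coeff_C_mul, mul_add, add_mul, ← Polynomial.C_mul, coeff_add, coeff_C_mul]
  cases i with
  | zero => simp [coeff_X_mul]
  | succ j =>
    simp only [Nat.succ_ne_zero, if_false, Nat.add_sub_cancel, mul_assoc, coeff_C_mul,
      coeff_X_mul]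

lemma σf_zero (i : ℕ) : σf 0 i = if i = 0 then 1 else 0 := by
  cases i with
  | zero => simp [σf]
  | succ j => simp [σf, Nat.choose]

lemma σf_one (i : ℕ) : σf 1 i = if i ≤ 1 then 1 else 0 := by
  match i with
  | 0 => simp [σf]
  | 1 => simp [σf]
  | (j+2) => simp [σf, Nat.choose_eq_zero_of_lt (by omega : 1 < j+2)]

lemma s_coeff (s : ℕ → Polynomial ℚ) (hs0 : s 0 = 1) (hs1 : s 1 = 1 + X)
    (hs : ∀ k : ℕ, 2 ≤ k →
      s k = Polynomial.C (1 / (k : ℚ)) * (Polynomial.C (2 * (k : ℚ) - 1) + X) * s (k - 1)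
              - Polynomial.C (((k : ℚ) - 1) / (k : ℚ)) * s (k - 2)) :
    ∀ k i, (s k).coeff i = σf k i := by
  intro k
  induction k using Nat.strong_induction_on with
  | _ k ih =>
    match k with
    | 0 =>
      intro i
      rw [hs0, σf_zero]
      by_cases h : i = 0 <;> simp [h, Polynomial.coeff_one]
    | 1 =>
      intro i
      rw [hs1, σf_one]
      match i with
      | 0 => simp [Polynomial.coeff_one, Polynomial.coeff_X]
      | 1 => simp [Polynomial.coeff_one, Polynomial.coeff_X]
      | (j+2) => simp [Polynomial.coeff_one, Polynomial.coeff_X]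
    | (m+2) =>
      intro i
      rw [hs (m+2) (by omega), coeff_comb]
      have e1 : m + 2 - 1 = m + 1 := rfl
      have e2 : m + 2 - 2 = m := rfl
      rw [e1, e2, ih (m+1) (by omega), ih m (by omega)]
      have hK : ((m:ℚ)+2) ≠ 0 := by positivity
      have hcast : ((m+2 : ℕ) : ℚ) = (m:ℚ)+2 := by push_cast; ring
      rw [hcast]
      cases i with
      | zero =>
        have := keyσ0 m
        simp only [if_pos rfl, ↓reduceIte]
        field_simp
        linear_combination -this
      | succ j =>
        have := keyσ m j
        have h2 : (ih (m+1) (by omega)) (j+1-1) = (ih (m+1) (by omega)) j := rfl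
        simp only [Nat.succ_ne_zero, if_false, Nat.add_sub_cancel, ih (m+1) (by omega)]
        field_simp
        linear_combination -this

lemma σf_eq_zero {k n : ℕ} (h : k < n) : σf k n = 0 := by
  simp [σf, Nat.choose_eq_zero_of_lt h]

noncomputable def cc (j : ℕ) : ℚ := (-1)^j * (j.factorial : ℚ)

noncomputable def ρf (k i : ℕ) : ℚ := -∑ j ∈ range (k+1), cc j * σf k (i+1+j)

lemma ρf_zero (i : ℕ) : ρf 0 i = 0 := by
  simp [ρf, σf, Nat.choose]

lemma alt_sum (n : ℕ) (hn : 1 ≤ n) : ∑ j ∈ range (n+1), (-1:ℚ)^j * (n.choose j) = 0 := by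
  have := Int.alternating_sum_range_choose (n := n)
  rw [if_neg (by omega)] at this
  exact_mod_cast this

lemma keyρ (m i : ℕ) : ((m:ℚ)+2) * ρf (m+2) i
    = (2*(m:ℚ)+3) * ρf (m+1) i + (if i = 0 then 0 else ρf (m+1) (i-1)) - ((m:ℚ)+1) * ρf m i := by
  have hA : ∑ j ∈ range (m+3), cc j * σf (m+1) (i+1+j)
      = ∑ j ∈ range (m+2), cc j * σf (m+1) (i+1+j) := by
    rw [Finset.sum_range_succ, σf_eq_zero (by omega), mul_zero, add_zero]
  have hC : ∑ j ∈ range (m+3), cc j * σf m (i+1+j)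
      = ∑ j ∈ range (m+1), cc j * σf m (i+1+j) := by
    rw [Finset.sum_range_succ, Finset.sum_range_succ, σf_eq_zero (by omega),
      σf_eq_zero (by omega), mul_zero, mul_zero, add_zero, add_zero]
  have hB : -∑ j ∈ range (m+3), cc j * σf (m+1) (i+j)
      = (if i = 0 then 0 else ρf (m+1) (i-1)) := by
    cases i with
    | zero =>
      rw [if_pos rfl]
      have : ∀ j ∈ range (m+3), cc j * σf (m+1) (0+j) = (-1:ℚ)^j * ((m+1).choose j) := by
        intro j _
        have hf : (j.factorial : ℚ) ≠ 0 := by exact_mod_cast j.factorial_ne_zero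
        rw [cc, σf]
        field_simp [cc, σf]
        ring
      rw [Finset.sum_congr rfl this]
      rw [show m+3 = (m+2)+1 from rfl, Finset.sum_range_succ,
        Nat.choose_eq_zero_of_lt (by omega : m+1 < m+2)]
      simp [alt_sum (m+1) (by omega)]
    | succ i' =>
      rw [if_neg (by omega)]
      have : ρf (m+1) (i'+1-1) = ρf (m+1) i' := rfl
      rw [this, ρf]
      congr 1
      rw [Finset.sum_range_succ (f := fun j => cc j * σf (m+1) (i'+1+j)) (n := m+2),
        σf_eq_zero (by omega : m+1 < i'+1+(m+2))]
      simp
  have step : ∀ j ∈ range (m+3), ((m:ℚ)+2) * (cc j * σf (m+2) (i+1+j))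
      = (2*(m:ℚ)+3) * (cc j * σf (m+1) (i+1+j)) + cc j * σf (m+1) (i+j)
        - ((m:ℚ)+1) * (cc j * σf m (i+1+j)) := by
    intro j _
    have hk := keyσ m (i+j)
    have e : i + j + 1 = i + 1 + j := by omega
    rw [e] at hk
    linear_combination (cc j) * hk
  have expand : ((m:ℚ)+2) * ρf (m+2) i
      = (2*(m:ℚ)+3) * (-∑ j ∈ range (m+3), cc j * σf (m+1) (i+1+j))
        + (-∑ j ∈ range (m+3), cc j * σf (m+1) (i+j))
        - ((m:ℚ)+1) * (-∑ j ∈ range (m+3), cc j * σf m (i+1+j)) := by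
    calc ((m:ℚ)+2) * ρf (m+2) i
        = -∑ j ∈ range (m+3), ((m:ℚ)+2) * (cc j * σf (m+2) (i+1+j)) := by
          rw [ρf, mul_neg, Finset.mul_sum]
      _ = -∑ j ∈ range (m+3), ((2*(m:ℚ)+3) * (cc j * σf (m+1) (i+1+j))
            + cc j * σf (m+1) (i+j) - ((m:ℚ)+1) * (cc j * σf m (i+1+j))) := by
          rw [Finset.sum_congr rfl step]
      _ = _ := by
          rw [Finset.sum_sub_distrib, Finset.sum_add_distrib, ← Finset.mul_sum, ← Finset.mul_sum]
          ring
  rw [expand]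
  rw [hA]
  rw [hC]
  rw [← hB, ρf, ρf]

lemma ρf_one (i : ℕ) : ρf 1 i = if i = 0 then -1 else 0 := by
  cases i with
  | zero =>
    rw [if_pos rfl, ρf]
    rw [show (1:ℕ)+1 = 2 from rfl, Finset.sum_range_succ, Finset.sum_range_succ,
      Finset.sum_range_zero, σf_eq_zero (by omega : 1 < 0+1+1)]
    simp [cc, σf]
  | succ i' =>
    rw [if_neg (by omega), ρf]
    apply neg_eq_zero.mpr
    apply Finset.sum_eq_zero
    intro j _
    rw [σf_eq_zero (by omega), mul_zero]

lemma r_coeff (r : ℕ → Polynomial ℚ) (hr0 : r 0 = 0) (hr1 : r 1 = -1)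
    (hr : ∀ k : ℕ, 2 ≤ k →
      r k = Polynomial.C (1 / (k : ℚ)) * (Polynomial.C (2 * (k : ℚ) - 1) + X) * r (k - 1)
              - Polynomial.C (((k : ℚ) - 1) / (k : ℚ)) * r (k - 2)) :
    ∀ k i, (r k).coeff i = ρf k i := by
  intro k
  induction k using Nat.strong_induction_on with
  | _ k ih =>
    match k with
    | 0 =>
      intro i
      rw [hr0, ρf_zero]
      simp
    | 1 =>
      intro i
      rw [hr1, ρf_one]
      by_cases h : i = 0 <;>
        simp [h, Polynomial.coeff_one, Polynomial.coeff_neg]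
    | (m+2) =>
      intro i
      rw [hr (m+2) (by omega), coeff_comb]
      have e1 : m + 2 - 1 = m + 1 := rfl
      have e2 : m + 2 - 2 = m := rfl
      rw [e1, e2, ih (m+1) (by omega), ih m (by omega)]
      have hK : ((m:ℚ)+2) ≠ 0 := by positivity
      have hcast : ((m+2 : ℕ) : ℚ) = (m:ℚ)+2 := by push_cast; ring
      rw [hcast]
      have hk := keyρ m i
      by_cases h : i = 0
      · subst h
        rw [if_pos rfl] at hk ⊢
        field_simp
        linear_combination -hk
      · rw [if_neg h] at hk ⊢
        rw [ih (m+1) (by omega)]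
        field_simp
        linear_combination -hk

noncomputable def coeffZ (p : Polynomial ℚ) (m : ℤ) : ℚ :=
  if 0 ≤ m then p.coeff m.toNat else 0

lemma toLaurent_at (p : Polynomial ℚ) (m : ℤ) : (toLaurent p).coeff m = coeffZ p m := by
  rw [coeff_toLaurent, coeffZ]
  rcases le_or_gt 0 m with h | h
  · lift m to ℕ using h
    rw [if_pos (by omega)]
    rw [show ((m:ℕ):ℤ) = Nat.castEmbedding m from rfl, Finsupp.mapDomain_apply Nat.castEmbedding.injective]
    rfl
  · rw [if_neg (by omega)]
    rw [Finsupp.mapDomain_notin_range]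
    rintro ⟨n, hn⟩
    change ((n:ℕ):ℤ) = m at hn
    omega

lemma mulT_at (f : LaurentPolynomial ℚ) (n m : ℤ) : (f * T n : LaurentPolynomial ℚ).coeff m = f.coeff (m - n) := by
  have h : (f * AddMonoidAlgebra.single n (1:ℚ) : AddMonoidAlgebra ℚ ℤ).coeff m = f.coeff (m + -n) * 1 :=
    AddMonoidAlgebra.coeff_mul_single_apply f 1 n m
  simpa [sub_eq_add_neg] using h

lemma Cmul_at (a : ℚ) (f : LaurentPolynomial ℚ) (m : ℤ) :
    (LaurentPolynomial.C a * f : LaurentPolynomial ℚ).coeff m = a * f.coeff m := by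
  have h : (AddMonoidAlgebra.single (0:ℤ) a * f : AddMonoidAlgebra ℚ ℤ).coeff m = a * f.coeff (-0 + m) :=
    AddMonoidAlgebra.coeff_single_mul_apply f a 0 m
  simpa using h

lemma caseA (k m : ℕ) : ∑ i ∈ range (2*k+1), cc i * σf k (m+1+i) = -ρf k m := by
  rw [ρf, neg_neg]
  apply (Finset.sum_subset (Finset.range_subset_range.mpr (by omega)) _).symm
  intro x _ hx
  rw [Finset.mem_range, not_lt] at hx
  rw [σf_eq_zero (by omega), mul_zero]

lemma sumval (k n' : ℕ) (h : n' ≤ k) :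
    ∑ i ∈ range (2*k+1-n'), cc (n'+i) * σf k i
      = (-1:ℚ)^(n'+k) * (n'.factorial : ℚ) * (n'.choose k : ℚ) := by
  have trim : ∑ i ∈ range (2*k+1-n'), cc (n'+i) * σf k i
      = ∑ i ∈ range (k+1), cc (n'+i) * σf k i := by
    apply (Finset.sum_subset (Finset.range_subset_range.mpr (by omega)) _).symm
    intro x _ hx
    rw [Finset.mem_range, not_lt] at hx
    rw [σf_eq_zero (by omega), mul_zero]
  rw [trim]
  have termwise : ∀ i ∈ range (k+1), cc (n'+i) * σf k i
      = ((-1:ℚ)^n' * (n'.factorial : ℚ)) * ((-1:ℚ)^i * (k.choose i : ℚ) * ((n'+i).choose (0+i) : ℚ)) := by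
    intro i _
    have hfac := Nat.choose_mul_factorial_mul_factorial (Nat.le_add_left i n')
    rw [Nat.add_sub_cancel] at hfac
    have hfacQ : ((n'+i).choose i : ℚ) * (i.factorial : ℚ) * (n'.factorial : ℚ) = ((n'+i).factorial : ℚ) := by
      exact_mod_cast hfac
    have hi : (i.factorial : ℚ) ≠ 0 := by exact_mod_cast i.factorial_ne_zero
    rw [cc, σf, pow_add, Nat.zero_add]
    field_simp
    linear_combination (-(k.choose i : ℚ)) * hfacQ
  rw [Finset.sum_congr rfl termwise, ← Finset.mul_sum, fd k n' 0, Nat.zero_add]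
  ring
lemma caseA' (k m : ℕ) : ρf k m + ∑ l ∈ Icc 1 (2*k+1), cc (l-1) * σf k (m + l) = 0 := by
  have h1 : ∑ l ∈ Icc 1 (2*k+1), cc (l-1) * σf k (m + l)
      = ∑ i ∈ range (2*k+1), cc i * σf k (m+1+i) := by
    rw [← Finset.Ico_add_one_right_eq_Icc, Finset.sum_Ico_eq_sum_range]
    apply Finset.sum_congr rfl
    intro i _
    congr 2
    · omega
    · omega
  rw [h1, caseA]
  ring

lemma caseB' (k jn : ℕ) (hj : jn ≤ k) :
    ∑ i ∈ range (2*k+1), cc i * (if k ≤ jn + i then σf k (jn + (1+i) - (k+1)) else 0)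
      = if jn = 0 then (k.factorial : ℚ) else 0 := by
  set n' := k - jn with hn'
  have hsplit : range (2*k+1) = Finset.Ico 0 n' ∪ Finset.Ico n' (2*k+1) := by
    rw [Finset.range_eq_Ico,
      Finset.Ico_union_Ico_eq_Ico (Nat.zero_le n') (by omega : n' ≤ 2*k+1)]
  rw [hsplit, Finset.sum_union (Finset.Ico_disjoint_Ico_consecutive 0 n' (2*k+1))]
  have hz : ∑ i ∈ Finset.Ico 0 n', cc i * (if k ≤ jn + i then σf k (jn + (1+i) - (k+1)) else 0) = 0 := by
    apply Finset.sum_eq_zero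
    intro i hi
    rw [Finset.mem_Ico] at hi
    rw [if_neg (by omega), mul_zero]
  rw [hz, zero_add]
  have h2 : ∑ i ∈ Finset.Ico n' (2*k+1), cc i * (if k ≤ jn + i then σf k (jn + (1+i) - (k+1)) else 0)
      = ∑ t ∈ range (2*k+1-n'), cc (n'+t) * σf k t := by
    rw [Finset.sum_Ico_eq_sum_range]
    apply Finset.sum_congr rfl
    intro t _
    rw [if_pos (by omega)]
    congr 1
    congr 1
    omega
  rw [h2, sumval k n' (by omega)]
  by_cases h0 : jn = 0
  · have : n' = k := by omega
    rw [this, if_pos h0, Nat.choose_self, show k+k = 2*k by ring, pow_mul]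
    norm_num
  · rw [if_neg h0, Nat.choose_eq_zero_of_lt (by omega)]
    ring

/-- With `r, s` as in the paper, the Laurent polynomial
`x^{k+1} rₖ(x) + x^{k+1} sₖ(x) ∑_{l=1}^{2k+1} (-1)^{l-1}(l-1)! x^{-l}`
is congruent to `k!` modulo `x⁻¹ℚ[x⁻¹]`: all its coefficients in degrees `≥ 1`
vanish and its constant coefficient equals `k!`. -/
theorem congruence_4_3
    (r s : ℕ → Polynomial ℚ)
    (hr0 : r 0 = 0) (hr1 : r 1 = -1) (hs0 : s 0 = 1) (hs1 : s 1 = 1 + X)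
    (hr : ∀ k : ℕ, 2 ≤ k →
      r k = Polynomial.C (1 / (k : ℚ)) * (Polynomial.C (2 * (k : ℚ) - 1) + X) * r (k - 1)
              - Polynomial.C (((k : ℚ) - 1) / (k : ℚ)) * r (k - 2))
    (hs : ∀ k : ℕ, 2 ≤ k →
      s k = Polynomial.C (1 / (k : ℚ)) * (Polynomial.C (2 * (k : ℚ) - 1) + X) * s (k - 1)
              - Polynomial.C (((k : ℚ) - 1) / (k : ℚ)) * s (k - 2)) :
    ∀ k : ℕ, 1 ≤ k →
      letI E : LaurentPolynomial ℚ :=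
        toLaurent (r k) * T ((k : ℤ) + 1)
          + toLaurent (s k) * T ((k : ℤ) + 1)
            * ∑ l ∈ Finset.Icc 1 (2 * k + 1),
                LaurentPolynomial.C ((-1 : ℚ) ^ (l - 1) * ((l - 1).factorial : ℚ))
                  * T (-(l : ℤ))
      (∀ j : ℤ, 1 ≤ j → E.coeff j = 0) ∧ E.coeff 0 = (k.factorial : ℚ) := by
  intro k hk
  have hrc := r_coeff r hr0 hr1 hr
  have hsc := s_coeff s hs0 hs1 hs
  have hEj : ∀ j : ℤ,
      (toLaurent (r k) * T ((k : ℤ) + 1)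
        + toLaurent (s k) * T ((k : ℤ) + 1)
          * ∑ l ∈ Finset.Icc 1 (2 * k + 1),
              LaurentPolynomial.C ((-1 : ℚ) ^ (l - 1) * ((l - 1).factorial : ℚ))
                * T (-(l : ℤ)) : LaurentPolynomial ℚ).coeff j
      = coeffZ (r k) (j - ((k:ℤ)+1))
        + ∑ l ∈ Finset.Icc 1 (2*k+1), cc (l-1) * coeffZ (s k) (j - ((k:ℤ)+1) + l) := by
    intro j
    rw [Finset.mul_sum]
    rw [AddMonoidAlgebra.coeff_add, Finsupp.add_apply]
    congr 1
    · rw [mulT_at, toLaurent_at]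
    · rw [AddMonoidAlgebra.coeff_sum, Finsupp.finset_sum_apply]
      apply Finset.sum_congr rfl
      intro l _
      have h1 : toLaurent (s k) * T ((k:ℤ)+1)
            * (LaurentPolynomial.C ((-1 : ℚ) ^ (l - 1) * ((l - 1).factorial : ℚ)) * T (-(l : ℤ)))
          = LaurentPolynomial.C (cc (l-1)) * (toLaurent (s k) * T ((k:ℤ)+1) * T (-(l:ℤ))) := by
        rw [cc]; ring
      rw [h1, mul_T_assoc, Cmul_at, mulT_at, toLaurent_at]
      congr 2
      ring
  have main : ∀ j : ℤ, 0 ≤ j →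
      coeffZ (r k) (j - ((k:ℤ)+1))
        + ∑ l ∈ Finset.Icc 1 (2*k+1), cc (l-1) * coeffZ (s k) (j - ((k:ℤ)+1) + l)
      = if j = 0 then (k.factorial : ℚ) else 0 := by
    intro j hj
    lift j to ℕ using hj with jn
    rcases le_or_gt ((k:ℤ)+1) jn with hbig | hsmall
    · -- j ≥ k+1
      set m : ℕ := jn - (k+1) with hm
      have h1 : coeffZ (r k) ((jn:ℤ) - ((k:ℤ)+1)) = ρf k m := by
        rw [coeffZ, if_pos (by omega), hrc]
        congr 1
        omega
      have h2 : ∀ l ∈ Finset.Icc 1 (2*k+1),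
          cc (l-1) * coeffZ (s k) ((jn:ℤ) - ((k:ℤ)+1) + l) = cc (l-1) * σf k (m + l) := by
        intro l hl
        rw [Finset.mem_Icc] at hl
        rw [coeffZ, if_pos (by omega), hsc]
        congr 2
        omega
      rw [h1, Finset.sum_congr rfl h2, if_neg (by omega)]
      exact caseA' k m
    · -- jn ≤ k
      have hjn : jn ≤ k := by omega
      have h1 : coeffZ (r k) ((jn:ℤ) - ((k:ℤ)+1)) = 0 := by
        rw [coeffZ, if_neg (by omega)]
      have h2 : ∑ l ∈ Finset.Icc 1 (2*k+1), cc (l-1) * coeffZ (s k) ((jn:ℤ) - ((k:ℤ)+1) + l)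
          = ∑ i ∈ range (2*k+1), cc i * (if k ≤ jn + i then σf k (jn + (1+i) - (k+1)) else 0) := by
        rw [← Finset.Ico_add_one_right_eq_Icc, Finset.sum_Ico_eq_sum_range]
        apply Finset.sum_congr rfl
        intro i _
        by_cases hc : k ≤ jn + i
        · rw [if_pos hc, coeffZ, if_pos (by push_cast; omega), hsc]
          congr 2
          · omega
          · push_cast; omega
        · rw [if_neg hc, coeffZ, if_neg (by push_cast; omega), mul_zero, mul_zero]
      rw [h1, h2, zero_add, caseB' k jn hjn]
      by_cases h0 : jn = 0
      · rw [if_pos h0, if_pos (by exact_mod_cast h0 : (jn:ℤ) = 0)]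
      · rw [if_neg h0, if_neg (fun hq => h0 (by exact_mod_cast hq))]
  refine ⟨fun j hj => ?_, ?_⟩
  · rw [hEj j, main j (by omega), if_neg (by omega)]
  · rw [hEj 0, main 0 le_rfl, if_pos rfl]
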